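/- Let p > 3 be prime and let δ, w ∈ ℤ/p be nonzero. Then the pair of binary quadratic forms (a² + δ·b², 2ab) is equivalent to (a² + δ·w⁴·b², 2ab). -/
import Mathlib


/-- A binary quadratic form over `ZMod p`, recorded by its coefficients:
`Q(a,b) = c20·a² + c11·a·b + c02·b²`. -/
structure BQF (p : ℕ) where
  c20 : ZMod p
  c11 : ZMod p
  c02 : ZMod p

/-- Evaluation of a binary quadratic form. -/
def BQF.eval {p : ℕ} (Q : BQF p) (a b : ZMod p) : ZMod p :=
  Q.c20 * a ^ 2 + Q.c11 * a * b + Q.c02 * b ^ 2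

/-- Two pairs `(Q₁, Q₂)` and `(Q₁', Q₂')` of binary quadratic forms over `ZMod p`
are equivalent if there are `R ∈ GL₂(ℤ/p)` and `S ∈ GL₂(ℤ/p)` with `det S = ±1`
such that `Qᵢ(R·(a,b)) = sᵢ₁·Q₁'(a,b) + sᵢ₂·Q₂'(a,b)` for all `(a,b)` and `i = 1,2`. -/
def PairEquiv {p : ℕ} (P P' : BQF p × BQF p) : Prop :=
  ∃ R S : Matrix (Fin 2) (Fin 2) (ZMod p),
    IsUnit R.det ∧ IsUnit S.det ∧ (S.det = 1 ∨ S.det = -1) ∧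
    (∀ a b : ZMod p,
      P.1.eval (R 0 0 * a + R 0 1 * b) (R 1 0 * a + R 1 1 * b) =
        S 0 0 * P'.1.eval a b + S 0 1 * P'.2.eval a b) ∧
    (∀ a b : ZMod p,
      P.2.eval (R 0 0 * a + R 0 1 * b) (R 1 0 * a + R 1 1 * b) =
        S 1 0 * P'.1.eval a b + S 1 1 * P'.2.eval a b)

open Polynomial in
/-- Any nondegenerate binary quadratic form `r² - δ t²` represents every value mod `p`. -/
lemma exists_rep (p : ℕ) [Fact p.Prime] (hp : 3 < p) (δ v : ZMod p) (hδ : δ ≠ 0) :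
    ∃ r t : ZMod p, r ^ 2 - δ * t ^ 2 = v := by
  have hcard : Fintype.card (ZMod p) % 2 = 1 := by
    rw [ZMod.card]
    exact Nat.odd_iff.mp ((Fact.out : p.Prime).odd_of_ne_two (by omega))
  obtain ⟨a, b, hab⟩ := FiniteField.exists_root_sum_quadratic
    (f := (X ^ 2 : (ZMod p)[X])) (g := C (-δ) * X ^ 2 + C 0 * X + C (-v))
    (degree_X_pow 2) (degree_quadratic (neg_ne_zero.mpr hδ)) hcard
  refine ⟨a, b, ?_⟩
  simp at hab
  linear_combination hab

/-- For nonzero `δ, w ∈ ℤ/p`, the pair `(a² + δ·b², 2ab)` is equivalent to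
`(a² + δ·w⁴·b², 2ab)`. -/
theorem equiv_of_fourth_power (p : ℕ) [Fact p.Prime] (hp : 3 < p)
    (δ w : ZMod p) (hδ : δ ≠ 0) (hw : w ≠ 0) :
    PairEquiv ((⟨1, 0, δ⟩ : BQF p), ⟨0, 2, 0⟩) (⟨1, 0, δ * w ^ 4⟩, ⟨0, 2, 0⟩) := by
  obtain ⟨r, t, hrt⟩ := exists_rep p hp δ w⁻¹ hδ
  have hinv : w * w⁻¹ = 1 := mul_inv_cancel₀ hw
  refine ⟨!![r, δ * w ^ 2 * t; t, w ^ 2 * r],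
    !![r ^ 2 + δ * t ^ 2, 2 * δ * w ^ 2 * r * t; 2 * r * t, w ^ 2 * (r ^ 2 + δ * t ^ 2)],
    ?_, ?_, ?_, ?_, ?_⟩
  · rw [Matrix.det_fin_two_of]
    have : r * (w ^ 2 * r) - δ * w ^ 2 * t * t = w := by
      linear_combination w ^ 2 * hrt + w * hinv
    rw [this]
    exact isUnit_iff_ne_zero.mpr hw
  · rw [Matrix.det_fin_two_of]
    have : (r ^ 2 + δ * t ^ 2) * (w ^ 2 * (r ^ 2 + δ * t ^ 2)) -
        2 * δ * w ^ 2 * r * t * (2 * r * t) = 1 := by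
      linear_combination (w ^ 2 * (r ^ 2 - δ * t ^ 2 + w⁻¹)) * hrt + (w * w⁻¹ + 1) * hinv
    rw [this]
    exact isUnit_one
  · left
    rw [Matrix.det_fin_two_of]
    linear_combination (w ^ 2 * (r ^ 2 - δ * t ^ 2 + w⁻¹)) * hrt + (w * w⁻¹ + 1) * hinv
  · intro a b
    simp only [BQF.eval, Matrix.cons_val', Matrix.cons_val_zero, Matrix.cons_val_one,
      Matrix.head_cons, Matrix.empty_val', Matrix.cons_val_fin_one, Matrix.head_fin_const,
      Matrix.of_apply]
    ring
  · intro a b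
    simp only [BQF.eval, Matrix.cons_val', Matrix.cons_val_zero, Matrix.cons_val_one,
      Matrix.head_cons, Matrix.empty_val', Matrix.cons_val_fin_one, Matrix.head_fin_const,
      Matrix.of_apply]
    ring
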